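/- Let T ≥ 1 be a natural number and let a, b be real numbers such that the complex polynomial map F(z) = z + a·z^{T+1} + b·z^{2T+1} is injective on the open unit disk {z ∈ ℂ : |z| < 1}. Then |a| ≤ 2(1+T)/(1+2T)·sin(π/(2+2T)) and |b| ≤ 1/(1+2T). -/

import Mathlib

open Real

noncomputable section CoeffBoundsAux

open Finset Metric

def Ff (T : ℕ) (a b : ℝ) (z : ℂ) : ℂ := z + (a:ℂ) * z^(T+1) + (b:ℂ) * z^(2*T+1)

def Cf (T : ℕ) (a b : ℝ) (x y : ℂ) : ℂ :=
  1 + (a:ℂ) * (∑ k ∈ Finset.range (T+1), x^k * y^(T-k))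
    + (b:ℂ) * (∑ k ∈ Finset.range (2*T+1), x^k * y^(2*T-k))


lemma Ff_sub (T : ℕ) (a b : ℝ) (x y : ℂ) :
    Ff T a b x - Ff T a b y = (x - y) * Cf T a b x y := by
  have h1 := geom_sum₂_mul x y (T+1)
  have h2 := geom_sum₂_mul x y (2*T+1)
  simp only [Nat.add_sub_cancel] at h1 h2
  unfold Ff Cf
  linear_combination (-(a:ℂ)) * h1 + (-(b:ℂ)) * h2

lemma Cf_diag (T : ℕ) (a b : ℝ) (x : ℂ) :
    Cf T a b x x = 1 + (a:ℂ)*(T+1)*x^T + (b:ℂ)*(2*T+1)*x^(2*T) := by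
  have key : ∀ n : ℕ, ∑ k ∈ Finset.range (n+1), x^k * x^(n-k) = ((n:ℂ)+1) * x^n := by
    intro n
    have e : ∀ k ∈ Finset.range (n+1), x^k * x^(n-k) = x^n := by
      intro k hk
      rw [← pow_add]
      congr 1
      have := Finset.mem_range.mp hk
      omega
    rw [Finset.sum_congr rfl e, Finset.sum_const, Finset.card_range, nsmul_eq_mul]
    push_cast
    ring
  unfold Cf
  rw [show 2*T+1 = (2*T)+1 from rfl, key T, key (2*T)]
  push_cast
  ring

lemma Cf_diff (T : ℕ) (a b : ℝ) (y : ℂ) : Differentiable ℂ (fun z => Cf T a b z y) := by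
  unfold Cf
  apply Differentiable.add
  apply Differentiable.add
  · exact differentiable_const _
  · exact (Differentiable.fun_sum fun k _ => (differentiable_pow k).mul_const _).const_mul _
  · exact (Differentiable.fun_sum fun k _ => (differentiable_pow k).mul_const _).const_mul _

lemma Cf_diag_diff (T : ℕ) (a b : ℝ) : Differentiable ℂ (fun z => Cf T a b z z) := by
  have : (fun z => Cf T a b z z) = fun z : ℂ => 1 + (a:ℂ)*(T+1)*z^T + (b:ℂ)*(2*T+1)*z^(2*T) :=
    funext fun z => Cf_diag T a b z
  rw [this]
  apply Differentiable.add
  apply Differentiable.add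
  · exact differentiable_const _
  · exact (differentiable_pow T).const_mul _
  · exact (differentiable_pow (2*T)).const_mul _

lemma Cf_ne (T : ℕ) (a b : ℝ) (hinj : Set.InjOn (Ff T a b) (Metric.ball (0:ℂ) 1))
    {x y : ℂ} (hx : x ∈ Metric.ball (0:ℂ) 1) (hy : y ∈ Metric.ball (0:ℂ) 1) (hxy : x ≠ y) :
    Cf T a b x y ≠ 0 := by
  intro h0
  apply hxy
  apply hinj hx hy
  have := Ff_sub T a b x y
  rw [h0, mul_zero, sub_eq_zero] at this
  exact this

lemma pow_sub_norm (m : ℕ) (y y' : ℂ) (hy : ‖y‖ ≤ 1) (hy' : ‖y'‖ ≤ 1) :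
    ‖y^m - y'^m‖ ≤ m * ‖y - y'‖ := by
  have h := geom_sum₂_mul y y' m
  calc ‖y^m - y'^m‖ = ‖(∑ i ∈ Finset.range m, y^i * y'^(m-1-i))‖ * ‖y - y'‖ := by
        rw [← norm_mul, h]
    _ ≤ m * ‖y - y'‖ := by
        apply mul_le_mul_of_nonneg_right _ (norm_nonneg _)
        calc ‖(∑ i ∈ Finset.range m, y^i * y'^(m-1-i))‖
            ≤ ∑ i ∈ Finset.range m, ‖y^i * y'^(m-1-i)‖ := norm_sum_le _ _
          _ ≤ ∑ i ∈ Finset.range m, 1 := by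
              apply Finset.sum_le_sum
              intro i _
              rw [norm_mul, norm_pow, norm_pow]
              exact mul_le_one₀ (pow_le_one₀ (norm_nonneg _) hy) (by positivity)
                (pow_le_one₀ (norm_nonneg _) hy')
          _ = m := by simp



lemma Cf_lip (T : ℕ) (a b : ℝ) (x y y' : ℂ) (hx : ‖x‖ ≤ 1) (hy : ‖y‖ ≤ 1) (hy' : ‖y'‖ ≤ 1) :
    ‖Cf T a b x y - Cf T a b x y'‖ ≤ (|a| * (T+1)^2 + |b| * (2*T+1)^2) * ‖y - y'‖ := by
  have key : ∀ n : ℕ, ‖(∑ k ∈ Finset.range (n+1), x^k * y^(n-k)) -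
      (∑ k ∈ Finset.range (n+1), x^k * y'^(n-k))‖ ≤ (n+1)^2 * ‖y - y'‖ := by
    intro n
    rw [← Finset.sum_sub_distrib]
    calc ‖∑ k ∈ Finset.range (n+1), (x^k * y^(n-k) - x^k * y'^(n-k))‖
        ≤ ∑ k ∈ Finset.range (n+1), ‖x^k * y^(n-k) - x^k * y'^(n-k)‖ := norm_sum_le _ _
      _ ≤ ∑ k ∈ Finset.range (n+1), (n+1) * ‖y - y'‖ := by
          apply Finset.sum_le_sum
          intro k _
          rw [← mul_sub, norm_mul, norm_pow]
          calc ‖x‖^k * ‖y^(n-k) - y'^(n-k)‖ ≤ 1 * ((n-k : ℕ) * ‖y - y'‖) := by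
                apply mul_le_mul (pow_le_one₀ (norm_nonneg _) hx)
                  (pow_sub_norm _ _ _ hy hy') (norm_nonneg _) zero_le_one
            _ ≤ (n+1) * ‖y - y'‖ := by
                rw [one_mul]
                apply mul_le_mul_of_nonneg_right _ (norm_nonneg _)
                have : (n - k : ℕ) ≤ n + 1 := by omega
                exact_mod_cast Nat.cast_le.mpr this
      _ = (n+1)^2 * ‖y - y'‖ := by
          rw [Finset.sum_const, Finset.card_range, nsmul_eq_mul]
          push_cast; ring
  have e : Cf T a b x y - Cf T a b x y' =
      (a:ℂ) * ((∑ k ∈ Finset.range (T+1), x^k * y^(T-k)) - (∑ k ∈ Finset.range (T+1), x^k * y'^(T-k)))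
    + (b:ℂ) * ((∑ k ∈ Finset.range (2*T+1), x^k * y^(2*T-k)) - (∑ k ∈ Finset.range (2*T+1), x^k * y'^(2*T-k))) := by
    unfold Cf; ring
  rw [e]
  set S1 := (∑ k ∈ Finset.range (T+1), x^k * y^(T-k)) - (∑ k ∈ Finset.range (T+1), x^k * y'^(T-k)) with hS1
  set S2 := (∑ k ∈ Finset.range (2*T+1), x^k * y^(2*T-k)) - (∑ k ∈ Finset.range (2*T+1), x^k * y'^(2*T-k)) with hS2
  have hk1 : ‖S1‖ ≤ (T+1)^2 * ‖y - y'‖ := key T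
  have hk2 : ‖S2‖ ≤ (2*T+1)^2 * ‖y - y'‖ := by
    have := key (2*T)
    rw [hS2]
    convert this using 3 <;> push_cast <;> ring
  calc ‖(a:ℂ) * S1 + (b:ℂ) * S2‖ ≤ ‖(a:ℂ) * S1‖ + ‖(b:ℂ) * S2‖ := norm_add_le _ _
    _ = |a| * ‖S1‖ + |b| * ‖S2‖ := by
        rw [norm_mul, norm_mul, Complex.norm_real, Complex.norm_real, Real.norm_eq_abs, Real.norm_eq_abs]
    _ ≤ |a| * ((T+1)^2 * ‖y - y'‖) + |b| * ((2*T+1)^2 * ‖y - y'‖) := by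
        gcongr
    _ = (|a| * (T+1)^2 + |b| * (2*T+1)^2) * ‖y - y'‖ := by push_cast; ring

lemma quad_root_small (A B : ℂ) (hB : B ≠ 0) (h1 : 1 < ‖B‖) :
    ∃ w : ℂ, ‖w‖ < 1 ∧ 1 + A * w + B * w^2 = 0 := by
  obtain ⟨s, hs⟩ := IsAlgClosed.exists_pow_nat_eq (A^2 - 4*B) (n := 2) two_pos
  set w1 : ℂ := (-A + s)/(2*B) with hw1
  set w2 : ℂ := (-A - s)/(2*B) with hw2
  have hroot1 : 1 + A * w1 + B * w1^2 = 0 := by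
    rw [hw1]; field_simp; ring_nf; linear_combination hs
  have hroot2 : 1 + A * w2 + B * w2^2 = 0 := by
    rw [hw2]; field_simp; ring_nf; linear_combination hs
  have hprod : w1 * w2 = 1/B := by
    rw [hw1, hw2]; field_simp; ring_nf; linear_combination (-1) * hs
  have hprodnorm : ‖w1‖ * ‖w2‖ < 1 := by
    rw [← norm_mul, hprod, norm_div, norm_one, div_lt_one (by linarith)]
    linarith
  rcases le_total ‖w1‖ ‖w2‖ with h | h
  · exact ⟨w1, by nlinarith [norm_nonneg w1, norm_nonneg w2], hroot1⟩
  · exact ⟨w2, by nlinarith [norm_nonneg w1, norm_nonneg w2], hroot2⟩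


lemma abs_B_le_one (T : ℕ) (hT : 1 ≤ T) (a b : ℝ)
    (hinj : Set.InjOn (Ff T a b) (Metric.ball (0:ℂ) 1)) :
    |b| * (2*(T:ℝ)+1) ≤ 1 := by
  by_contra hB
  push_neg at hB
  have hTpos : (0:ℝ) < 2*(T:ℝ)+1 := by positivity
  have hbne : b ≠ 0 := by
    intro h; rw [h, abs_zero, zero_mul] at hB; linarith
  have hBnorm : ‖(b:ℂ) * (2*(T:ℕ)+1)‖ = |b| * (2*(T:ℝ)+1) := by
    rw [norm_mul, Complex.norm_real, Real.norm_eq_abs]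
    congr 1
    rw [show ((2*(T:ℕ)+1 : ℂ)) = (((2*(T:ℝ)+1 : ℝ)) : ℂ) by push_cast; ring,
      Complex.norm_real, Real.norm_eq_abs, abs_of_pos hTpos]
  have hBne : ((b:ℂ) * (2*(T:ℕ)+1)) ≠ 0 := by
    intro h
    rw [← norm_eq_zero, hBnorm] at h
    nlinarith
  obtain ⟨w, hwlt, hwroot⟩ := quad_root_small ((a:ℂ) * ((T:ℕ)+1)) ((b:ℂ) * (2*(T:ℕ)+1))
    hBne (by rw [hBnorm]; exact hB)
  obtain ⟨z0, hz0⟩ := IsAlgClosed.exists_pow_nat_eq w (n := T) (by omega)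
  have hz0lt : ‖z0‖ < 1 := by
    by_contra h
    push_neg at h
    have : (1:ℝ) ≤ ‖z0‖^T := one_le_pow₀ h
    rw [← norm_pow, hz0] at this
    linarith
  have hz0ball : z0 ∈ Metric.ball (0:ℂ) 1 := by simpa using hz0lt
  have hdiag0 : Cf T a b z0 z0 = 0 := by
    rw [Cf_diag, show 2*T = T*2 by ring, pow_mul, hz0]
    push_cast
    push_cast at hwroot
    linear_combination hwroot
  -- analytic setup
  set p : ℂ → ℂ := fun z => Cf T a b z z0 with hp
  set q : ℂ → ℂ := fun z => Cf T a b z z with hq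
  have hpanal : AnalyticOnNhd ℂ p Set.univ :=
    (Cf_diff T a b z0).differentiableOn.analyticOnNhd isOpen_univ
  have hqanal : AnalyticOnNhd ℂ q Set.univ :=
    (Cf_diag_diff T a b).differentiableOn.analyticOnNhd isOpen_univ
  -- F is injective on ball so p is not eventually zero
  have hFconst : ¬ (∀ᶠ z in nhds z0, p z = 0) := by
    intro hev
    have hEq : Set.EqOn p 0 Set.univ := by
      apply hpanal.eqOn_zero_of_preconnected_of_frequently_eq_zero isPreconnected_univ
        (Set.mem_univ z0)
      exact (hev.filter_mono nhdsWithin_le_nhds).frequently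
    have hF : ∀ z : ℂ, Ff T a b z = Ff T a b z0 := by
      intro z
      have := Ff_sub T a b z z0
      rw [show Cf T a b z z0 = p z from rfl, hEq (Set.mem_univ z), Pi.zero_apply, mul_zero,
        sub_eq_zero] at this
      exact this
    have h12 : ((1:ℂ)/2) = 1/4 := by
      apply hinj
      · simp [Metric.mem_ball]; norm_num
      · simp [Metric.mem_ball]; norm_num
      · rw [hF (1/2), hF (1/4)]
    norm_num at h12
  have hppunct : ∀ᶠ z in nhdsWithin z0 {z0}ᶜ, p z ≠ 0 :=
    ((hpanal z0 (Set.mem_univ z0)).eventually_eq_zero_or_eventually_ne_zero).resolve_left hFconst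
  have hqpunct : ∀ᶠ z in nhdsWithin z0 {z0}ᶜ, q z ≠ 0 := by
    apply ((hqanal z0 (Set.mem_univ z0)).eventually_eq_zero_or_eventually_ne_zero).resolve_left
    intro hev
    have hEq : Set.EqOn q 0 Set.univ := by
      apply hqanal.eqOn_zero_of_preconnected_of_frequently_eq_zero isPreconnected_univ
        (Set.mem_univ z0)
      exact (hev.filter_mono nhdsWithin_le_nhds).frequently
    have h0 : q 0 = 0 := hEq (Set.mem_univ 0)
    rw [hq] at h0
    simp only [Cf_diag, zero_pow (by omega : T ≠ 0), zero_pow (by omega : 2*T ≠ 0)] at h0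
    simp at h0
  -- choose radius
  rw [eventually_nhdsWithin_iff, Metric.eventually_nhds_iff] at hppunct
  obtain ⟨δ, hδpos, hδ⟩ := hppunct
  set ρ : ℝ := min (δ/2) ((1 - ‖z0‖)/2) with hρ
  have hρpos : 0 < ρ := by
    apply lt_min (by linarith)
    linarith
  have hρδ : ρ < δ := by
    calc ρ ≤ δ/2 := min_le_left _ _
      _ < δ := by linarith
  have hρball : ∀ z : ℂ, dist z z0 ≤ ρ → ‖z‖ < 1 := by
    intro z hz
    have h1 : ρ ≤ (1 - ‖z0‖)/2 := min_le_right _ _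
    have h2 : ‖z‖ ≤ ‖z - z0‖ + ‖z0‖ := by
      calc ‖z‖ = ‖(z - z0) + z0‖ := by rw [sub_add_cancel]
        _ ≤ ‖z - z0‖ + ‖z0‖ := norm_add_le _ _
    rw [dist_eq_norm] at hz
    linarith
  have hsphere_ne : ∀ z ∈ sphere z0 ρ, p z ≠ 0 := by
    intro z hz
    rw [mem_sphere] at hz
    apply hδ (by rw [hz]; exact hρδ)
    simp only [Set.mem_compl_iff, Set.mem_singleton_iff]
    intro h
    rw [h, dist_self] at hz
    exact absurd hz.symm (ne_of_gt hρpos)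
  -- minimum of ‖p‖ on the sphere
  obtain ⟨zm, hzm_mem, hzm'⟩ := (isCompact_sphere z0 ρ).exists_isMinOn
    (NormedSpace.sphere_nonempty.mpr hρpos.le)
    ((Cf_diff T a b z0).continuous.norm.continuousOn)
  have hzm : ∀ z ∈ sphere z0 ρ, ‖p zm‖ ≤ ‖p z‖ := fun z hz => hzm' hz
  set ε : ℝ := ‖p zm‖ with hε
  have hεpos : 0 < ε := norm_pos_iff.mpr (hsphere_ne zm hzm_mem)
  clear_value ε
  set L : ℝ := |a| * ((T:ℝ)+1)^2 + |b| * (2*(T:ℝ)+1)^2 + 1 with hL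
  have hLpos : 0 < L := by positivity
  -- choose w' close to z0
  have hball_ev : ∀ᶠ z in nhdsWithin z0 {z0}ᶜ, dist z z0 < min ρ (ε/(2*L)) := by
    apply eventually_nhdsWithin_of_eventually_nhds
    apply Metric.eventually_nhds_iff.mpr
    exact ⟨min ρ (ε/(2*L)), by positivity, fun {x} hx => hx⟩
  have hself : ∀ᶠ z in nhdsWithin z0 {z0}ᶜ, z ∈ ({z0}ᶜ : Set ℂ) := self_mem_nhdsWithin
  obtain ⟨w', hw'all⟩ := ((hqpunct.and hball_ev).and hself).exists
  obtain ⟨⟨hw'q, hw'd⟩, hw'ne⟩ := hw'all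
  have hw'z0 : w' ≠ z0 := by simpa using hw'ne
  have hw'ρ : dist w' z0 < ρ := lt_of_lt_of_le hw'd (min_le_left _ _)
  have hw'L : dist w' z0 < ε/(2*L) := lt_of_lt_of_le hw'd (min_le_right _ _)
  have hw'1 : ‖w'‖ < 1 := hρball w' hw'ρ.le
  have hw'1' : ‖w'‖ ≤ 1 := hw'1.le
  have hz01 : ‖z0‖ ≤ 1 := hz0lt.le
  -- the perturbed function g z = Cf z w'
  set g : ℂ → ℂ := fun z => Cf T a b z w' with hg
  clear_value L
  have hglip : ∀ z : ℂ, ‖z‖ ≤ 1 → ‖g z - p z‖ ≤ L * dist w' z0 := by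
    intro z hz
    have := Cf_lip T a b z w' z0 hz hw'1' hz01
    rw [← dist_eq_norm w' z0] at this
    calc ‖g z - p z‖ ≤ (|a| * ((T:ℝ)+1)^2 + |b| * (2*(T:ℝ)+1)^2) * dist w' z0 := by
          push_cast at this ⊢; exact this
      _ ≤ L * dist w' z0 := by
          apply mul_le_mul_of_nonneg_right _ dist_nonneg
          rw [hL]; linarith
  have hLd : L * dist w' z0 < ε/2 := by
    have := (mul_lt_mul_iff_right₀ hLpos).mpr hw'L
    calc L * dist w' z0 < L * (ε/(2*L)) := this
      _ = ε/2 := by field_simp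
  have hg_sphere : ∀ z ∈ sphere z0 ρ, ε/2 ≤ ‖g z‖ := by
    intro z hz
    have hz1 : ‖z‖ ≤ 1 := (hρball z (mem_sphere.mp hz).le).le
    have h1 := hglip z hz1
    have h2 : ε ≤ ‖p z‖ := hzm z hz
    have h3 : ‖p z‖ - ‖g z‖ ≤ ‖g z - p z‖ := by
      rw [norm_sub_rev]
      exact norm_sub_norm_le _ _
    linarith
  have hg_z0 : ‖g z0‖ < ε/2 := by
    have h1 := hglip z0 hz01
    have h2 : p z0 = 0 := hdiag0
    rw [h2, sub_zero] at h1
    linarith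
  -- minimum modulus principle: g has a zero in the closed ball
  have hgzero : ∃ z1 ∈ closedBall z0 ρ, g z1 = 0 := by
    by_contra hcon
    push_neg at hcon
    have hdcc : DiffContOnCl ℂ (fun z => (g z)⁻¹) (ball z0 ρ) := by
      constructor
      · intro z hz
        exact (((Cf_diff T a b w') z).inv (hcon z (ball_subset_closedBall hz))).differentiableWithinAt
      · rw [closure_ball z0 hρpos.ne']
        intro z hz
        exact (((Cf_diff T a b w') z).inv (hcon z hz)).continuousAt.continuousWithinAt
    have hfr : ∀ z ∈ frontier (ball z0 ρ), ‖(g z)⁻¹‖ ≤ (ε/2)⁻¹ := by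
      rw [frontier_ball z0 hρpos.ne']
      intro z hz
      rw [norm_inv]
      exact inv_anti₀ (by positivity) (hg_sphere z hz)
    have hcl : z0 ∈ closure (ball z0 ρ) := by
      rw [closure_ball z0 hρpos.ne']
      exact mem_closedBall_self hρpos.le
    have := Complex.norm_le_of_forall_mem_frontier_norm_le (Metric.isBounded_ball) hdcc hfr hcl
    rw [norm_inv] at this
    have hgz0ne : g z0 ≠ 0 := hcon z0 (mem_closedBall_self hρpos.le)
    have hgz0pos : 0 < ‖g z0‖ := norm_pos_iff.mpr hgz0ne
    have h2 : (ε/2)⁻¹ < ‖g z0‖⁻¹ := by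
      apply inv_strictAnti₀ hgz0pos hg_z0
    linarith
  obtain ⟨z1, hz1mem, hz1⟩ := hgzero
  have hz1ball : z1 ∈ Metric.ball (0:ℂ) 1 := by
    simpa using hρball z1 (mem_closedBall.mp hz1mem)
  have hw'ball : w' ∈ Metric.ball (0:ℂ) 1 := by simpa using hw'1
  have hz1w' : z1 ≠ w' := by
    intro h
    rw [h] at hz1
    exact hw'q hz1
  exact Cf_ne T a b hinj hz1ball hw'ball hz1w' hz1

lemma im_pow (r θ : ℝ) (n : ℕ) :
    (((r:ℂ) * Complex.exp (θ * Complex.I))^n).im = r^n * Real.sin (n*θ) := by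
  rw [mul_pow, ← Complex.exp_nat_mul, ← Complex.ofReal_pow,
    show ((n:ℂ) * ((θ:ℂ) * Complex.I)) = ((n*θ : ℝ) : ℂ) * Complex.I by push_cast; ring,
    Complex.im_ofReal_mul, Complex.exp_ofReal_mul_I_im]

lemma Ff_conj (T : ℕ) (a b : ℝ) (z : ℂ) :
    Ff T a b ((starRingEnd ℂ) z) = (starRingEnd ℂ) (Ff T a b z) := by
  unfold Ff
  simp [map_add, map_mul, map_pow, Complex.conj_ofReal]

lemma slice_nonneg (T : ℕ) (hT : 1 ≤ T) (a b : ℝ)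
    (hinj : Set.InjOn (Ff T a b) (Metric.ball (0:ℂ) 1)) :
    ∀ θ : ℝ, 0 ≤ θ → θ ≤ π →
      0 ≤ Real.sin θ + a * Real.sin (((T:ℝ)+1)*θ) + b * Real.sin ((2*(T:ℝ)+1)*θ) := by
  intro θ hθ0 hθπ
  rcases eq_or_lt_of_le hθ0 with h0 | hθpos
  · rw [← h0]; simp
  rcases eq_or_lt_of_le hθπ with hπ | hθltπ
  · rw [hπ]
    rw [show ((T:ℝ)+1)*π = ((T+1 : ℕ):ℝ)*π by push_cast; ring,
      show (2*(T:ℝ)+1)*π = ((2*T+1 : ℕ):ℝ)*π by push_cast; ring,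
      Real.sin_pi, Real.sin_nat_mul_pi, Real.sin_nat_mul_pi]
    norm_num
  have hsin : 0 < Real.sin θ := Real.sin_pos_of_pos_of_lt_pi hθpos hθltπ
  set φ : ℝ → ℝ := fun r => Real.sin θ + a * r^T * Real.sin (((T:ℝ)+1)*θ)
    + b * r^(2*T) * Real.sin ((2*(T:ℝ)+1)*θ) with hφ
  have hφcont : Continuous φ := by fun_prop
  have hφzero : φ 0 = Real.sin θ := by
    rw [hφ]
    simp [zero_pow (by omega : T ≠ 0), zero_pow (by omega : 2*T ≠ 0)]
  have hφne : ∀ r : ℝ, 0 < r → r < 1 → φ r ≠ 0 := by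
    intro r hr0 hr1 hzero
    set z : ℂ := (r:ℂ) * Complex.exp (θ * Complex.I) with hz
    have hznorm : ‖z‖ = r := by
      rw [hz, norm_mul, Complex.norm_real, Real.norm_eq_abs, abs_of_pos hr0,
        Complex.norm_exp_ofReal_mul_I, mul_one]
    have hzball : z ∈ Metric.ball (0:ℂ) 1 := by
      rw [Metric.mem_ball, dist_zero_right, hznorm]; exact hr1
    have hzbar : (starRingEnd ℂ) z ∈ Metric.ball (0:ℂ) 1 := by
      rw [Metric.mem_ball, dist_zero_right, RCLike.norm_conj, hznorm]; exact hr1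
    have hzim : z.im = r * Real.sin θ := by
      rw [hz]
      simpa using im_pow r θ 1
    have hne : z ≠ (starRingEnd ℂ) z := by
      intro h
      have : z.im = 0 := by
        have h2 := congrArg Complex.im h
        rw [Complex.conj_im] at h2
        linarith
      rw [hzim] at this
      nlinarith
    have hFne : Ff T a b z ≠ Ff T a b ((starRingEnd ℂ) z) := fun h => hne (hinj hzball hzbar h)
    apply hFne
    rw [Ff_conj]
    have him : (Ff T a b z).im = r * φ r := by
      unfold Ff
      rw [hφ]
      simp only [hz]
      simp only [Complex.add_im, Complex.im_ofReal_mul, im_pow, Complex.exp_ofReal_mul_I_im]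
      push_cast
      ring
    symm
    rw [Complex.conj_eq_iff_im, him, hzero, mul_zero]
  have hφnonneg : ∀ r : ℝ, 0 ≤ r → r < 1 → 0 ≤ φ r := by
    intro r hr0 hr1
    by_contra hneg
    push_neg at hneg
    have hr0' : r ≠ 0 := by
      intro h; rw [h, hφzero] at hneg; linarith
    have hIcc : (0:ℝ) ∈ Set.Icc (φ r) (φ 0) := by
      constructor
      · linarith
      · rw [hφzero]; linarith
    obtain ⟨c, hc_mem, hc⟩ := intermediate_value_Icc' (le_of_lt (lt_of_le_of_ne hr0 (Ne.symm hr0')))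
      hφcont.continuousOn hIcc
    have hcne : c ≠ 0 := by
      intro h; rw [h, hφzero] at hc; linarith
    exact hφne c (lt_of_le_of_ne hc_mem.1 (Ne.symm hcne)) (lt_of_le_of_lt hc_mem.2 hr1) hc
  have key : 0 ≤ φ 1 := by
    apply ge_of_tendsto ((hφcont.tendsto 1).mono_left (nhdsWithin_le_nhds (s := Set.Iio 1)))
    filter_upwards [Ioo_mem_nhdsLT_of_mem (by norm_num : (1:ℝ) ∈ Set.Ioc 0 1)] with r hr
    exact hφnonneg r hr.1.le hr.2
  rw [hφ] at key
  simpa using key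

lemma inj_neg (T : ℕ) (hT : 1 ≤ T) (a b : ℝ)
    (hinj : Set.InjOn (Ff T a b) (Metric.ball (0:ℂ) 1)) :
    Set.InjOn (Ff T (-a) b) (Metric.ball (0:ℂ) 1) := by
  set e : ℂ := Complex.exp ((π/T : ℝ) * Complex.I) with he
  have hTne : (T:ℂ) ≠ 0 := by exact_mod_cast (by omega : (T:ℕ) ≠ 0)
  have heT : e^T = -1 := by
    rw [he, ← Complex.exp_nat_mul,
      show (T:ℂ) * (((π/T : ℝ):ℂ) * Complex.I) = (π:ℂ) * Complex.I by
        push_cast; field_simp,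
      Complex.exp_pi_mul_I]
  have henorm : ‖e‖ = 1 := by
    rw [he, Complex.norm_exp_ofReal_mul_I]
  have hene : e ≠ 0 := by
    intro h; rw [h, norm_zero] at henorm; norm_num at henorm
  have h1 : e^(T+1) = -e := by rw [pow_succ, heT]; ring
  have h2 : e^(2*T+1) = e := by
    rw [show 2*T+1 = T+(T+1) by ring, pow_add, pow_succ, heT]; ring
  have key : ∀ z : ℂ, e * Ff T (-a) b z = Ff T a b (e * z) := by
    intro z
    unfold Ff
    rw [mul_pow, mul_pow, h1, h2]
    push_cast
    ring
  intro z1 hz1 z2 hz2 heq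
  have hb1 : e * z1 ∈ Metric.ball (0:ℂ) 1 := by
    rw [Metric.mem_ball, dist_zero_right, norm_mul, henorm, one_mul]
    simpa using hz1
  have hb2 : e * z2 ∈ Metric.ball (0:ℂ) 1 := by
    rw [Metric.mem_ball, dist_zero_right, norm_mul, henorm, one_mul]
    simpa using hz2
  have : Ff T a b (e * z1) = Ff T a b (e * z2) := by
    rw [← key, ← key, heq]
  exact mul_left_cancel₀ hene (hinj hb1 hb2 this)

end CoeffBoundsAux

open Metric in
theorem coeff_bounds_of_injOn (T : ℕ) (hT : 1 ≤ T) (a b : ℝ)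
    (hinj : Set.InjOn (fun z : ℂ => z + (a : ℂ) * z^(T+1) + (b : ℂ) * z^(2*T+1))
      (Metric.ball (0 : ℂ) 1)) :
    |a| ≤ 2 * (1 + (T:ℝ)) / (1 + 2*(T:ℝ)) * Real.sin (π / (2 + 2*(T:ℝ))) ∧
    |b| ≤ 1 / (1 + 2*(T:ℝ)) := by
  have hinj' : Set.InjOn (Ff T a b) (Metric.ball (0:ℂ) 1) := hinj
  have hT1 : (1:ℝ) ≤ (T:ℝ) := by exact_mod_cast hT
  have hden : (0:ℝ) < 1 + 2*(T:ℝ) := by linarith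
  have hb := abs_B_le_one T hT a b hinj'
  have hbbound : |b| ≤ 1 / (1 + 2*(T:ℝ)) := by
    rw [le_div_iff₀ hden]
    calc |b| * (1 + 2*(T:ℝ)) = |b| * (2*(T:ℝ)+1) := by ring
      _ ≤ 1 := hb
  refine ⟨?_, hbbound⟩
  -- a bound
  set β : ℝ := π / (2 + 2*(T:ℝ)) with hβ
  have hβpos : 0 < β := by
    apply div_pos Real.pi_pos
    linarith
  have hβle : β < π := by
    rw [hβ, div_lt_iff₀ (by linarith)]
    nlinarith [Real.pi_pos]
  have hθmem : 0 ≤ π - β ∧ π - β ≤ π := ⟨by linarith, by linarith⟩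
  -- trig evaluations at θ = π - β
  have e1 : Real.sin (π - β) = Real.sin β := Real.sin_pi_sub β
  have hTβ : ((T:ℝ)+1) * β = π/2 := by
    rw [hβ]
    field_simp
    ring
  have h2Tβ : (2*(T:ℝ)+1) * β = π - β := by
    rw [hβ]
    field_simp
    ring
  have e2 : Real.sin (((T:ℝ)+1) * (π - β)) = (-1)^T := by
    have : ((T:ℝ)+1) * (π - β) = ((T+1 : ℕ):ℝ) * π - π/2 := by
      push_cast
      linear_combination (-1 : ℝ) * hTβ
    rw [this, Real.sin_nat_mul_pi_sub, Real.sin_pi_div_two, mul_one, pow_succ]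
    ring
  have e3 : Real.sin ((2*(T:ℝ)+1) * (π - β)) = Real.sin β := by
    have : (2*(T:ℝ)+1) * (π - β) = ((2*T+1 : ℕ):ℝ) * π - (π - β) := by
      push_cast
      linear_combination (-1 : ℝ) * h2Tβ
    rw [this, Real.sin_nat_mul_pi_sub, Real.sin_pi_sub, pow_succ, pow_mul]
    norm_num
  have s1 := slice_nonneg T hT a b hinj' (π - β) hθmem.1 hθmem.2
  have s2 := (slice_nonneg T hT (-a) b (inj_neg T hT a b hinj')) (π - β) hθmem.1 hθmem.2
  rw [e1, e2, e3] at s1 s2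
  have hsinβ : 0 < Real.sin β := Real.sin_pos_of_pos_of_lt_pi hβpos hβle
  have habs : |a| ≤ (1 + b) * Real.sin β := by
    have h1 : |(-1:ℝ)^T * a| = |a| := by
      rw [abs_mul, abs_pow, abs_neg, abs_one, one_pow, one_mul]
    rw [← h1, abs_le]
    constructor
    · nlinarith [s2]
    · nlinarith [s1]
  have hble : b ≤ 1 / (1 + 2*(T:ℝ)) := le_trans (le_abs_self b) hbbound
  calc |a| ≤ (1 + b) * Real.sin β := habs
    _ ≤ (1 + 1/(1 + 2*(T:ℝ))) * Real.sin β := by nlinarith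
    _ = 2 * (1 + (T:ℝ)) / (1 + 2*(T:ℝ)) * Real.sin β := by
        rw [show (1:ℝ) + 1/(1 + 2*(T:ℝ)) = 2 * (1 + (T:ℝ)) / (1 + 2*(T:ℝ)) by
          field_simp; ring]
    _ = 2 * (1 + (T:ℝ)) / (1 + 2*(T:ℝ)) * Real.sin (π / (2 + 2*(T:ℝ))) := by rw [hβ]
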